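/- Let h : ℝⁿ → ℝⁿ satisfy d(h(x), h(y)) = d(x, y) for all x, y, where d(x,y) = Σᵢ dᵢ(|xᵢ − yᵢ|) with each dᵢ continuous, strictly increasing, dᵢ(0)=0. If additionally h(s + a eᵢ) = h(s) + a (h(s + eᵢ) − h(s)) for all s, a, i (h maps axis-parallel lines to lines affinely), then φ(s) = h(s) − h(0) satisfies φ(Σᵢ aᵢ eᵢ) = Σᵢ aᵢ φ(eᵢ), i.e., h is affine. -/
import Mathlib


/-- If `h` preserves the separable distance `d(x,y) = ∑ᵢ dᵢ(|xᵢ − yᵢ|)` and maps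
axis-parallel lines affinely, then `φ(s) = h(s) − h(0)` is linear on the
standard basis: `φ(∑ᵢ aᵢ eᵢ) = ∑ᵢ aᵢ φ(eᵢ)`, i.e. `h` is affine. -/
theorem distance_preserving_line_affine_is_affine {n : ℕ}
    (di : Fin n → ℝ → ℝ)
    (hcont : ∀ i, ContinuousOn (di i) (Set.Ici 0))
    (hmono : ∀ i, StrictMonoOn (di i) (Set.Ici 0))
    (h0 : ∀ i, di i 0 = 0)
    (d : (Fin n → ℝ) → (Fin n → ℝ) → ℝ)
    (hd : ∀ x y, d x y = ∑ i, di i |x i - y i|)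
    (h : (Fin n → ℝ) → (Fin n → ℝ))
    (hiso : ∀ x y, d (h x) (h y) = d x y)
    (hline : ∀ (s : Fin n → ℝ) (a : ℝ) (i : Fin n),
      h (s + a • (Pi.single i 1 : Fin n → ℝ))
        = h s + a • (h (s + (Pi.single i 1 : Fin n → ℝ)) - h s)) :
    ∀ a : Fin n → ℝ,
      h (∑ i, a i • (Pi.single i 1 : Fin n → ℝ)) - h 0
        = ∑ i, a i • (h (Pi.single i 1 : Fin n → ℝ) - h 0) := by
  -- Key: direction vectors are independent of base point
  have key : ∀ (s t : Fin n → ℝ) (i : Fin n),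
      h (s + (Pi.single i 1 : Fin n → ℝ)) - h s
        = h (t + (Pi.single i 1 : Fin n → ℝ)) - h t := by
    intro s t i
    by_contra hne
    set c : Fin n → ℝ := fun j => h s j - h t j with hc
    set w : Fin n → ℝ := fun j =>
      (h (s + (Pi.single i 1 : Fin n → ℝ)) - h s) j
        - (h (t + (Pi.single i 1 : Fin n → ℝ)) - h t) j with hwdef
    obtain ⟨j0, hj0⟩ : ∃ j, w j ≠ 0 := by
      by_contra hall
      push_neg at hall
      apply hne
      funext j
      have := hall j
      simp only [hwdef] at this
      linarith [sub_eq_zero.mp this]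
    -- the function a ↦ ∑ j, di j |c j + a * w j| is constant
    have hf : ∀ a : ℝ, ∑ j, di j |c j + a * w j| = ∑ j, di j |c j| := by
      intro a
      have h1 : d (h (s + a • (Pi.single i 1 : Fin n → ℝ)))
          (h (t + a • (Pi.single i 1 : Fin n → ℝ))) = d (h s) (h t) := by
        rw [hiso, hiso, hd, hd]
        apply Finset.sum_congr rfl
        intro j _
        congr 1
        by_cases hji : j = i
        · subst hji; simp [Pi.single_apply]
        · simp [Pi.single_apply, hji]
      rw [hline, hline, hd, hd] at h1
      calc ∑ j, di j |c j + a * w j|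
          = ∑ j, di j |(h s + a • (h (s + (Pi.single i 1 : Fin n → ℝ)) - h s)) j
              - (h t + a • (h (t + (Pi.single i 1 : Fin n → ℝ)) - h t)) j| := by
            apply Finset.sum_congr rfl
            intro j _
            congr 1
            simp only [hc, hwdef, Pi.add_apply, Pi.smul_apply, Pi.sub_apply, smul_eq_mul]
            ring_nf
        _ = ∑ j, di j |h s j - h t j| := h1
        _ = ∑ j, di j |c j| := rfl
    -- choose a large value A
    have hterm_nonneg : ∀ j : Fin n, 0 ≤ 2 * |c j| / |w j| := fun j =>
      div_nonneg (by positivity) (abs_nonneg _)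
    obtain ⟨A, hApos, hbig⟩ : ∃ A : ℝ, 0 < A ∧
        ∀ j : Fin n, w j ≠ 0 → 2 * |c j| < A * |w j| := by
      refine ⟨1 + ∑ j, 2 * |c j| / |w j|, ?_, ?_⟩
      · have hs : (0:ℝ) ≤ ∑ j, 2 * |c j| / |w j| :=
          Finset.sum_nonneg fun j _ => hterm_nonneg j
        linarith
      · intro j hj
        have hwj : 0 < |w j| := abs_pos.mpr hj
        have h1 : 2 * |c j| / |w j| ≤ ∑ k, 2 * |c k| / |w k| :=
          Finset.single_le_sum (fun k _ => hterm_nonneg k) (Finset.mem_univ j)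
        have h2 : 2 * |c j| / |w j| < 1 + ∑ k, 2 * |c k| / |w k| := by linarith
        calc 2 * |c j| = (2 * |c j| / |w j|) * |w j| := by field_simp
          _ < (1 + ∑ k, 2 * |c k| / |w k|) * |w j| := mul_lt_mul_of_pos_right h2 hwj
    -- strict growth on nonzero coordinates
    have habs_strict : ∀ j : Fin n, w j ≠ 0 →
        |c j + A * w j| < |c j + (2 * A) * w j| := by
      intro j hj
      have hb := hbig j hj
      have hwj : 0 < |w j| := abs_pos.mpr hj
      have l1 : |c j + A * w j| ≤ |c j| + A * |w j| := by
        calc |c j + A * w j| ≤ |c j| + |A * w j| := abs_add_le _ _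
          _ = |c j| + A * |w j| := by rw [abs_mul, abs_of_pos hApos]
      have l2 : 2 * A * |w j| ≤ |c j + (2 * A) * w j| + |c j| := by
        have h2 : |(2 * A) * w j| = 2 * A * |w j| := by
          rw [abs_mul, abs_of_pos (by linarith : (0:ℝ) < 2 * A)]
        have h3 : (2 * A) * w j = (c j + (2 * A) * w j) - c j := by ring
        calc 2 * A * |w j| = |(2 * A) * w j| := h2.symm
          _ = |(c j + (2 * A) * w j) - c j| := by rw [← h3]
          _ ≤ |c j + (2 * A) * w j| + |c j| := abs_sub _ _
      nlinarith
    have habs : ∀ j : Fin n, |c j + A * w j| ≤ |c j + (2 * A) * w j| := by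
      intro j
      by_cases hj : w j = 0
      · simp [hj]
      · exact (habs_strict j hj).le
    have hlt : ∑ j, di j |c j + A * w j| < ∑ j, di j |c j + (2 * A) * w j| := by
      apply Finset.sum_lt_sum
      · intro j _
        exact (hmono j).monotoneOn (Set.mem_Ici.mpr (abs_nonneg _))
          (Set.mem_Ici.mpr (abs_nonneg _)) (habs j)
      · exact ⟨j0, Finset.mem_univ j0,
          (hmono j0) (Set.mem_Ici.mpr (abs_nonneg _))
            (Set.mem_Ici.mpr (abs_nonneg _)) (habs_strict j0 hj0)⟩
    rw [hf A, hf (2 * A)] at hlt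
    exact lt_irrefl _ hlt
  -- step lemma
  have step : ∀ (s : Fin n → ℝ) (a : ℝ) (i : Fin n),
      h (s + a • (Pi.single i 1 : Fin n → ℝ))
        = h s + a • (h (Pi.single i 1 : Fin n → ℝ) - h 0) := by
    intro s a i
    rw [hline]
    congr 1
    rw [key s 0 i]
    simp
  -- induction on finsets
  intro a
  have main : ∀ S : Finset (Fin n),
      h (∑ i ∈ S, a i • (Pi.single i 1 : Fin n → ℝ))
        = h 0 + ∑ i ∈ S, a i • (h (Pi.single i 1 : Fin n → ℝ) - h 0) := by
    intro S
    induction S using Finset.induction_on with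
    | empty => simp
    | @insert j S' hj ih =>
      rw [Finset.sum_insert hj, Finset.sum_insert hj, add_comm (a j • _), step, ih]
      abel
  rw [main Finset.univ]
  abel
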